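/- Let G = (V,E) be a graph where vertices represent Z-checks and edges represent qubits, and for each vertex v define Z_v as the product of Pauli-Z on edges incident to v (formally, the indicator vector in F_2^E of edges incident to v). Let T be a BFS tree of G − (v_s,v_t) rooted at v_s with levels L_0,L_1,…, and suppose all edges of G − (v_s,v_t) join vertices within the same level or adjacent levels. Define vectors over F_2^E: h_1 = e_{(v_s,v_t)} (the indicator of the edge (v_s,v_t)) and recursively h_{j+1} = h_j + Σ_{v ∈ L_{j−1}} ∂v, where ∂v ∈ F_2^E is the incidence vector of v. Then h_{j+1} equals the indicator vector of E_{j−1,j}, the set of edges between levels L_{j−1} and L_j, for all j ≥ 1 with L_j nonempty and not containing v_t. -/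

import Mathlib

/-- For the graph of Z-checks (vertices) and qubits (edges), with BFS level function ℓ
from the root v_s in the graph with the edge e0 = (v_s,v_t) removed, the recursively
defined vectors h_{j+1} = h_j + Σ_{v ∈ L_{j−1}} ∂v (with h_1 the indicator of e0)
equal the indicator of the edge set E_{j−1,j} between consecutive levels. -/
theorem stmt12 {V E : Type*} [Fintype V] [Fintype E] [DecidableEq V] [DecidableEq E]
    (ends : E → Sym2 V) (hloop : ∀ e, ¬ (ends e).IsDiag)
    (vs vt : V) (e0 : E) (hends : ends e0 = s(vs, vt))
    (ℓ : V → ℕ) (hroot : ℓ vs = 0)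
    (hBFS : ∀ e : E, e ≠ e0 → ∀ a b : V, ends e = s(a, b) →
      ℓ a ≤ ℓ b + 1 ∧ ℓ b ≤ ℓ a + 1)
    (h : ℕ → E → ZMod 2)
    (h1 : h 1 = fun e => if e = e0 then 1 else 0)
    (hrec : ∀ j : ℕ, 1 ≤ j → h (j + 1) =
      h j + ∑ v ∈ Finset.univ.filter (fun v : V => ℓ v = j - 1),
        (fun e => if v ∈ ends e then 1 else 0)) :
    ∀ j : ℕ, 1 ≤ j → j ≤ ℓ vt →
      h (j + 1) = fun e =>
        if (e ≠ e0 ∧ ∃ a b : V, ends e = s(a, b) ∧ ℓ a = j - 1 ∧ ℓ b = j)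
        then 1 else 0 := by
  -- every edge has two distinct endpoints
  have hex : ∀ e : E, ∃ a b : V, ends e = s(a, b) ∧ a ≠ b := by
    intro e
    have hself : ∀ x : Sym2 V, ∃ a b : V, x = s(a, b) := by
      intro x
      induction x using Sym2.ind with
      | _ a b => exact ⟨a, b, rfl⟩
    obtain ⟨a, b, hab⟩ := hself (ends e)
    refine ⟨a, b, hab, ?_⟩
    intro hEq
    exact hloop e (by rw [hab, hEq]; exact Sym2.isDiag_iff_proj_eq |>.mpr rfl)
  -- key sum computation
  have key : ∀ (e : E) (a b : V) (k : ℕ), ends e = s(a, b) → a ≠ b →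
      (∑ v ∈ Finset.univ.filter (fun v : V => ℓ v = k),
        (fun e => if v ∈ ends e then (1 : ZMod 2) else 0)) e
      = (if ℓ a = k then 1 else 0) + (if ℓ b = k then 1 else 0) := by
    intro e a b k he hab
    rw [Finset.sum_apply]
    have step : ∀ v : V, (if v ∈ ends e then (1 : ZMod 2) else 0)
        = (if v = a then 1 else 0) + (if v = b then 1 else 0) := by
      intro v
      simp only [he, Sym2.mem_iff]
      by_cases hva : v = a <;> by_cases hvb : v = b <;> simp_all
    rw [Finset.sum_congr rfl fun v _ => step v, Finset.sum_add_distrib,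
      Finset.sum_ite_eq' _ a (fun _ => (1 : ZMod 2)),
      Finset.sum_ite_eq' _ b (fun _ => (1 : ZMod 2))]
    simp [Finset.mem_filter]
  -- rewriting the existential condition
  have exiff : ∀ (e : E) (a b : V) (p q : ℕ), ends e = s(a, b) →
      ((∃ x y : V, ends e = s(x, y) ∧ ℓ x = p ∧ ℓ y = q) ↔
        (ℓ a = p ∧ ℓ b = q) ∨ (ℓ a = q ∧ ℓ b = p)) := by
    intro e a b p q he
    constructor
    · rintro ⟨x, y, hxy, hp, hq⟩
      rw [he, Sym2.eq_iff] at hxy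
      rcases hxy with ⟨rfl, rfl⟩ | ⟨rfl, rfl⟩
      · exact Or.inl ⟨hp, hq⟩
      · exact Or.inr ⟨hq, hp⟩
    · rintro (⟨hp, hq⟩ | ⟨hq, hp⟩)
      · exact ⟨a, b, he, hp, hq⟩
      · exact ⟨b, a, by rw [he, Sym2.eq_swap], hp, hq⟩
  have hvsvt : vs ≠ vt := by
    intro hEq
    exact hloop e0 (by rw [hends, hEq]; exact Sym2.isDiag_iff_proj_eq |>.mpr rfl)
  intro j
  induction j with
  | zero => intro h0; omega
  | succ n ih =>
    intro _ hle
    rcases Nat.eq_zero_or_pos n with rfl | hn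
    · -- base case j = 1
      rw [hrec 1 le_rfl, h1]
      funext e
      by_cases he0 : e = e0
      · rw [he0, Pi.add_apply, key e0 vs vt 0 hends hvsvt]
        have hvt : ℓ vt ≠ 0 := by omega
        simp [hroot, hvt]
        decide
      · obtain ⟨a, b, hab, hne⟩ := hex e
        rw [Pi.add_apply, key e a b 0 hab hne]
        have hb := hBFS e he0 a b hab
        simp only [ne_eq, he0, not_false_iff, true_and, exiff e a b 0 1 hab, if_neg he0,
          zero_add]
        split_ifs <;> first | rfl | decide | omega | simp_all
    · -- inductive step, j = n + 1 with n ≥ 1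
      have hIH := ih hn (by omega)
      rw [hrec (n + 1) (by omega), hIH]
      funext e
      simp only [Nat.add_sub_cancel, Pi.add_apply]
      by_cases he0 : e = e0
      · rw [he0, key e0 vs vt n hends hvsvt]
        have h1' : ℓ vs ≠ n := by omega
        have h2' : ℓ vt ≠ n := by omega
        simp [h1', h2']
      · obtain ⟨a, b, hab, hne⟩ := hex e
        rw [key e a b n hab hne]
        have hb := hBFS e he0 a b hab
        simp only [ne_eq, he0, not_false_iff, true_and, exiff e a b (n - 1) n hab,
          exiff e a b n (n + 1) hab]
        split_ifs <;> first | rfl | decide | omega
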